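/- Let H ⊆ F be a C-monoid such that the reduced class semigroup C*(H,F) is a union of groups. Then for every nonunit a ∈ H \ H^×, the class [a] in the class semigroup is idempotent, i.e., a is H-equivalent to a². -/
import Mathlib


/-- The factorial monoid `F = F^× × ℱ(P)`, with unit group `Fu` and free
abelian monoid `ℱ(P)` modeled by `Multiplicative (P →₀ ℕ)`. -/
abbrev FM (Fu P : Type*) [CommGroup Fu] : Type _ := Fu × Multiplicative (P →₀ ℕ)

/-- `H`-equivalence on `F`: `y ~ y'` iff for all `x ∈ F`, `x*y ∈ H ↔ x*y' ∈ H`. -/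
def HRel {M : Type*} [CommMonoid M] (H : Submonoid M) (y y' : M) : Prop :=
  ∀ x : M, x * y ∈ H ↔ x * y' ∈ H

/-- `y ∈ (F \ F^×) ∪ {1}`: the representatives of the reduced class semigroup. -/
def NU1 {M : Type*} [Monoid M] (y : M) : Prop := ¬ IsUnit y ∨ y = 1

/-- The reduced class semigroup `C*(H,F)` is finite: there are finitely many
`H`-equivalence classes of elements of `(F \ F^×) ∪ {1}`. -/
def CStarFinite {M : Type*} [CommMonoid M] (H : Submonoid M) : Prop :=
  ∃ (n : ℕ) (f : Fin n → M), ∀ y : M, NU1 y → ∃ i : Fin n, HRel H y (f i)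

/-- `C*(H,F)` is a union of groups: each class `[y]` lies in some subgroup,
i.e. in the constituent group of some idempotent `[e]`: `[e] + [e] = [e]`,
`[y] + [e] = [y]` and `[y] + [z] = [e]` for some class `[z]`. -/
def CStarUnionOfGroups {M : Type*} [CommMonoid M] (H : Submonoid M) : Prop :=
  ∀ y : M, NU1 y → ∃ e : M, NU1 e ∧ HRel H (e * e) e ∧ HRel H (y * e) y ∧
    ∃ z : M, NU1 z ∧ HRel H (y * z) e

/-- `H^× = H ∩ F^×`: every element of `H` which is invertible in `F` has its
inverse in `H`. -/
def UnitsCond {M : Type*} [Monoid M] (H : Submonoid M) : Prop :=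
  ∀ u : Mˣ, (u : M) ∈ H → ((u⁻¹ : Mˣ) : M) ∈ H

/-- `H` is seminormal: for `x = a/b ∈ q(H)` (`a, b ∈ H`) with `x^n ∈ H` for all
sufficiently large `n` (i.e. `a^n = h_n * b^n` with `h_n ∈ H`), one has `x ∈ H`
(i.e. `a = h * b` with `h ∈ H`). -/
def SeminormalSub {M : Type*} [CommMonoid M] (H : Submonoid M) : Prop :=
  ∀ a b : M, a ∈ H → b ∈ H → (∃ m : ℕ, ∀ n ≥ m, ∃ h ∈ H, a ^ n = h * b ^ n) →
    ∃ h ∈ H, a = h * b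

section Aux
variable {M : Type*} [CommMonoid M] {H : Submonoid M}

lemma hrel_refl (y : M) : HRel H y y := fun _ => Iff.rfl

lemma hrel_symm {y y' : M} (h : HRel H y y') : HRel H y' y := fun x => (h x).symm

lemma hrel_trans {y y' y'' : M} (h : HRel H y y') (h' : HRel H y' y'') :
    HRel H y y'' := fun x => (h x).trans (h' x)

lemma hrel_mul_left (c : M) {y y' : M} (h : HRel H y y') :
    HRel H (c * y) (c * y') := fun x => by
  rw [← mul_assoc, ← mul_assoc]; exact h (x * c)

end Aux

theorem stmt_10' {Fu P : Type*} [CommGroup Fu] (H : Submonoid (FM Fu P))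
    (hfin : CStarFinite H) (hug : CStarUnionOfGroups H) :
    ∀ a : FM Fu P, a ∈ H → ¬ IsUnit a → HRel H (a * a) a := by
  intro a ha hna
  obtain ⟨e, -, hE, hA, z, -, hZ⟩ := hug a (Or.inl hna)
  -- key : a^(i+1) * z^i ~ a
  have key : ∀ i : ℕ, HRel H (a ^ (i + 1) * z ^ i) a := by
    intro i
    induction i with
    | zero => simpa using hrel_refl a
    | succ i ih =>
        have h1 : HRel H (a ^ (i + 1) * z ^ i * (a * z)) (a * (a * z)) := by
          intro x
          rw [show x * (a ^ (i+1) * z ^ i * (a * z)) = x * (a*z) * (a ^ (i+1) * z ^ i) by ac_rfl,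
            show x * (a * (a * z)) = x * (a*z) * a by ac_rfl]
          exact ih (x * (a * z))
        have h2 : HRel H (a * (a * z)) (a * e) := hrel_mul_left a hZ
        have h3 : HRel H (a ^ (i + 1) * z ^ i * (a * z)) a :=
          hrel_trans h1 (hrel_trans h2 hA)
        have : a ^ (i + 1 + 1) * z ^ (i + 1) = a ^ (i + 1) * z ^ i * (a * z) := by
          rw [pow_succ a (i+1), pow_succ z i]; ac_rfl
        rw [this]; exact h3
  -- pigeonhole to get i < j with a^(i+1) ~ a^(j+1)
  obtain ⟨n, f, hf⟩ := hfin
  have hnu : ∀ k : ℕ, NU1 (a ^ (k + 1)) := by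
    intro k
    refine Or.inl fun hu => hna ?_
    exact (isUnit_pow_iff (Nat.succ_ne_zero k)).mp hu
  choose g hg using fun k : Fin (n + 1) => hf (a ^ ((k : ℕ) + 1)) (hnu k)
  obtain ⟨k, l, hkl, hgkl⟩ :=
    Fintype.exists_ne_map_eq_of_card_lt g (by simp)
  -- wlog k < l
  obtain ⟨i, j, hij, hij2⟩ : ∃ i j : ℕ, i < j ∧ HRel H (a ^ (i + 1)) (a ^ (j + 1)) := by
    rcases lt_or_gt_of_ne (fun h => hkl (by exact_mod_cast Fin.ext h : k = l) :
        (k : ℕ) ≠ (l : ℕ)) with h | h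
    · exact ⟨k, l, h, hrel_trans (hg k) (hgkl ▸ hrel_symm (hg l))⟩
    · exact ⟨l, k, h, hrel_trans (hg l) (hgkl ▸ hrel_symm (hg k))⟩
  set d := j - i with hd
  have hd1 : 1 ≤ d := by omega
  -- a ~ a^(d+1)
  have main : HRel H a (a ^ (d + 1)) := by
    have h1 : HRel H (z ^ i * a ^ (i + 1)) (z ^ i * a ^ (j + 1)) :=
      hrel_mul_left _ hij2
    have h2 : HRel H (a ^ (i + 1) * z ^ i) (a ^ d * (a ^ (i + 1) * z ^ i)) := by
      have : z ^ i * a ^ (j + 1) = a ^ d * (a ^ (i + 1) * z ^ i) := by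
        rw [show j + 1 = d + (i + 1) by omega, pow_add]; ac_rfl
      rw [mul_comm (z ^ i)] at h1
      rw [this] at h1
      exact h1
    have h3 : HRel H (a ^ d * (a ^ (i + 1) * z ^ i)) (a ^ d * a) :=
      hrel_mul_left _ (key i)
    have h4 : a ^ d * a = a ^ (d + 1) := by rw [pow_succ]
    exact hrel_trans (hrel_symm (key i)) (hrel_trans h2 (h4 ▸ h3))
  -- conclude
  intro x
  constructor
  · intro hx
    refine (main x).mpr ?_
    have : x * a ^ (d + 1) = x * (a * a) * a ^ (d - 1) := by
      rw [show d + 1 = 2 + (d - 1) by omega, pow_add, pow_two]; ac_rfl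
    rw [this]
    exact mul_mem hx (pow_mem ha _)
  · intro hx
    rw [← mul_assoc]
    exact mul_mem hx ha

/-- Let `H ⊆ F` be a C-monoid whose reduced class semigroup `C*(H,F)` is a
union of groups.  Then for every nonunit `a ∈ H \ H^×`, the class `[a]` is
idempotent, i.e. `a` is `H`-equivalent to `a²`. -/
theorem stmt_10 {Fu P : Type*} [CommGroup Fu] (H : Submonoid (FM Fu P))
    (hux : UnitsCond H) (hfin : CStarFinite H) (hug : CStarUnionOfGroups H) :
    ∀ a : FM Fu P, a ∈ H → ¬ IsUnit a → HRel H (a * a) a :=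
  stmt_10' H hfin hug
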